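/- In the space Bir₂ of quadratic birational maps of P²(C) one has the incidence relations (closures taken inside Bir₂): the closure of Σ¹ equals Σ⁰ ∪ Σ¹, the closure of Σ² equals Σ⁰ ∪ Σ¹ ∪ Σ², and the closure of Σ³ equals Σ⁰ ∪ Σ¹ ∪ Σ² ∪ Σ³ = Bir₂; in particular Σ³ is dense in Bir₂. -/

import Mathlib

open MvPolynomial

/-- Homogeneous-coordinate polynomials: polynomials in three variables over `ℂ`. -/
abbrev P3 : Type := MvPolynomial (Fin 3) ℂ

/-- Vectors in `ℂ³` (homogeneous coordinates on `ℙ²(ℂ)`). -/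
abbrev V3 : Type := Fin 3 → ℂ

/-- Evaluation of a polynomial triple at a point of `ℂ³`. -/
noncomputable def evalT (F : Fin 3 → P3) (x : V3) : V3 := fun i => eval x (F i)

/-- Two vectors of `ℂ³` represent the same point of `ℙ²(ℂ)`. -/
def ProjRel (u v : V3) : Prop := ∃ c : ℂ, c ≠ 0 ∧ v = c • u

/-- The three components have no nonconstant common factor. -/
def NoCommonFactor (F : Fin 3 → P3) : Prop := ∀ p : P3, (∀ i, p ∣ F i) → IsUnit p

/-- The Jacobian determinant `det (∂Fᵢ/∂xⱼ)` of a polynomial triple. -/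
noncomputable def detJac (F : Fin 3 → P3) : P3 :=
  Matrix.det (Matrix.of fun i j => pderiv j (F i))

/-- `G` is a rational inverse of `F`: both composites are (a nonzero multiple of) the
identity as rational maps of `ℙ²(ℂ)`. -/
def InverseOf (G F : Fin 3 → P3) : Prop :=
  (∃ h : P3, h ≠ 0 ∧ ∀ i, bind₁ F (G i) = h * X i) ∧
  (∃ h : P3, h ≠ 0 ∧ ∀ i, bind₁ G (F i) = h * X i)

/-- The rational map of `ℙ²(ℂ)` induced by `F` is birational: it admits a rational
inverse (given by a triple of homogeneous polynomials of some common degree). -/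
def IsBirational (F : Fin 3 → P3) : Prop :=
  ∃ (m : ℕ) (G : Fin 3 → P3), (∀ i, (G i).IsHomogeneous m) ∧ InverseOf G F

/-- `F` contracts the curve `{P = 0}`: the image under `F` of the curve, away from the
indeterminacy points of `F`, is a single point of `ℙ²(ℂ)`. -/
def Contracts (F : Fin 3 → P3) (P : P3) : Prop :=
  ∃ p : V3, p ≠ 0 ∧ ∀ x : V3, x ≠ 0 → eval x P = 0 → evalT F x ≠ 0 →
    ProjRel p (evalT F x)

/-- The triple of linear forms associated with a matrix `B`, i.e. the substitution
`x ↦ Bx`. -/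
noncomputable def linSub (B : Matrix (Fin 3) (Fin 3) ℂ) : Fin 3 → P3 :=
  fun j => ∑ k, C (B j k) * X k

/-- The left-right action: `(A, B) · F = A ∘ F ∘ B`. -/
noncomputable def gd (A B : Matrix (Fin 3) (Fin 3) ℂ) (F : Fin 3 → P3) : Fin 3 → P3 :=
  fun i => ∑ j, C (A i j) * bind₁ (linSub B) (F j)

/-- Left-right (g.d.) equivalence of rational maps: `G = A F B` for some
`A, B ∈ PGL₃(ℂ)` (up to the projective scalar `c`). -/
def GDEquiv (F G : Fin 3 → P3) : Prop :=
  ∃ (A B : Matrix (Fin 3) (Fin 3) ℂ) (c : ℂ), IsUnit A.det ∧ IsUnit B.det ∧ c ≠ 0 ∧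
    ∀ i, G i = C c * gd A B F i

/-- The Cremona involution `σ`. -/
noncomputable def sigmaC : Fin 3 → P3 := ![X 1 * X 2, X 0 * X 2, X 0 * X 1]

/-- The involution `ρ = (x₀x₁ : x₂² : x₁x₂)`. -/
noncomputable def rhoC : Fin 3 → P3 := ![X 0 * X 1, X 2 ^ 2, X 1 * X 2]

/-- The involution `τ = (x₀² : x₀x₁ : x₁² − x₀x₂)`. -/
noncomputable def tauC : Fin 3 → P3 := ![X 0 ^ 2, X 0 * X 1, X 1 ^ 2 - X 0 * X 2]

/-- The element `x₀·(x₀ : x₁ : x₂)` of `Σ⁰`. -/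
noncomputable def lin0C : Fin 3 → P3 := ![X 0 ^ 2, X 0 * X 1, X 0 * X 2]

/-- The coefficient space of (triples of) quadratic forms in three variables:
`Rat₂` is its projectivization. -/
abbrev W9 : Type := Fin 3 → Fin 3 → Fin 3 → ℂ

/-- The quadratic triple with coefficients `w`. -/
noncomputable def toPoly (w : W9) : Fin 3 → P3 :=
  fun i => ∑ j, ∑ k, C (w i j k) * (X j * X k)

/-- Membership in the (cone over the) left-right orbit of the model `F₀`. -/
def InGDOrbit (F₀ : Fin 3 → P3) (w : W9) : Prop :=
  ∃ (A B : Matrix (Fin 3) (Fin 3) ℂ) (c : ℂ), IsUnit A.det ∧ IsUnit B.det ∧ c ≠ 0 ∧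
    ∀ i, toPoly w i = C c * gd A B F₀ i

/-- `Σ³`, the left-right orbit of `σ`. -/
def Sigma3 : Set W9 := {w | InGDOrbit sigmaC w}

/-- `Σ²`, the left-right orbit of `ρ`. -/
def Sigma2 : Set W9 := {w | InGDOrbit rhoC w}

/-- `Σ¹`, the left-right orbit of `τ`. -/
def Sigma1 : Set W9 := {w | InGDOrbit tauC w}

/-- `Σ⁰`, the left-right orbit of `x₀·(x₀:x₁:x₂)`, i.e. the quadratic triples of the
form `ℓ(ℓ₀:ℓ₁:ℓ₂)` with `ℓ₀, ℓ₁, ℓ₂` independent linear forms. -/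
def Sigma0 : Set W9 := {w | InGDOrbit lin0C w}

/-- `Bir₂ = Σ⁰ ∪ Σ¹ ∪ Σ² ∪ Σ³`, the quadratic birational maps. -/
def Bir2 : Set W9 := Sigma0 ∪ Sigma1 ∪ Sigma2 ∪ Sigma3

namespace Inc

def sw (w : W9) (i j k : Fin 3) : ℂ := w i j k + w i k j

noncomputable def Jfun (w : W9) (x : V3) : ℂ :=
  (Matrix.of fun i j => ∑ k, sw w i j k * x k).det

noncomputable def Phi (w : W9) (x y z : V3) : ℂ :=
  (6⁻¹ : ℂ) * (Jfun w (x + y + z) - Jfun w (x + y) - Jfun w (x + z) - Jfun w (y + z)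
    + Jfun w x + Jfun w y + Jfun w z)

def ebase (a : Fin 3) : V3 := fun b => if b = a then 1 else 0

def Z1 : Set W9 := {w | ∀ x y z x' y' z' : V3,
  Phi w x y z * Phi w x' y' z' = Phi w x' y z * Phi w x y' z'}

def Z2 : Set W9 := {w | ∀ x : V3,
  (Matrix.of fun a b => Phi w x (ebase a) (ebase b)).det = 0}

lemma pderiv_linSub (B : Matrix (Fin 3) (Fin 3) ℂ) (m j : Fin 3) :
    pderiv j (linSub B m) = C (B m j) := by
  fin_cases j <;>
    simp [linSub, Fin.sum_univ_three, pderiv_mul, pderiv_X, Pi.single_apply]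

lemma eval_linSub (B : Matrix (Fin 3) (Fin 3) ℂ) (x : V3) (m : Fin 3) :
    eval x (linSub B m) = B.mulVec x m := by
  simp [linSub, Fin.sum_univ_three, Matrix.mulVec, dotProduct]

lemma eval_pderiv_toPoly (w : W9) (i j : Fin 3) (x : V3) :
    eval x (pderiv j (toPoly w i)) = ∑ k, sw w i j k * x k := by
  fin_cases j <;>
    simp [toPoly, sw, Fin.sum_univ_three, pderiv_mul, pderiv_X, Pi.single_apply] <;>
    ring

lemma Jfun_eq (w : W9) (x : V3) :
    Jfun w x = (Matrix.of fun i j => eval x (pderiv j (toPoly w i))).det := by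
  unfold Jfun
  congr 1
  ext i j
  simp [eval_pderiv_toPoly]

lemma Jfun_orbit_sigma {w : W9} {A B : Matrix (Fin 3) (Fin 3) ℂ} {c : ℂ}
    (hw : ∀ i, toPoly w i = C c * gd A B sigmaC i) (x : V3) :
    Jfun w x = c ^ 3 * A.det * B.det *
      (2 * (B.mulVec x 0 * (B.mulVec x 1 * B.mulVec x 2))) := by
  have hE : (Matrix.of fun i j => eval x (pderiv j (toPoly w i)))
      = c • (A * Matrix.of ![![0, B.mulVec x 2, B.mulVec x 1],
                             ![B.mulVec x 2, 0, B.mulVec x 0],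
                             ![B.mulVec x 1, B.mulVec x 0, 0]] * B) := by
    ext i j
    rw [Matrix.of_apply, hw i]
    simp only [gd, sigmaC, Fin.sum_univ_three, Matrix.cons_val_zero, Matrix.cons_val_one,
      Matrix.head_cons, Matrix.cons_val_two, Matrix.tail_cons, _root_.map_mul, bind₁_X_right,
      pderiv_C_mul, map_add, pderiv_mul, pderiv_linSub, Matrix.smul_apply,
      Matrix.mul_apply, Matrix.of_apply, smul_eq_mul, map_ofNat]
    simp only [map_add, _root_.map_mul, eval_C, eval_linSub]
    fin_cases i <;> fin_cases j <;>
      simp [Fin.sum_univ_three, Matrix.mul_apply] <;> ring_nf <;> tauto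
  rw [Jfun_eq, hE, Matrix.det_smul, Matrix.det_mul, Matrix.det_mul]
  have h2 : (Matrix.of ![![0, B.mulVec x 2, B.mulVec x 1],
                             ![B.mulVec x 2, 0, B.mulVec x 0],
                             ![B.mulVec x 1, B.mulVec x 0, 0]]).det
      = 2 * (B.mulVec x 0 * (B.mulVec x 1 * B.mulVec x 2)) := by
    simp [Matrix.det_fin_three, Matrix.vecHead, Matrix.vecTail]; ring
  rw [h2]
  simp [Fintype.card_fin]
  ring

lemma Jfun_orbit_rho {w : W9} {A B : Matrix (Fin 3) (Fin 3) ℂ} {c : ℂ}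
    (hw : ∀ i, toPoly w i = C c * gd A B rhoC i) (x : V3) :
    Jfun w x = c ^ 3 * A.det * B.det *
      (-2 * (B.mulVec x 1 * (B.mulVec x 2 * B.mulVec x 2))) := by
  have hE : (Matrix.of fun i j => eval x (pderiv j (toPoly w i)))
      = c • (A * Matrix.of ![![B.mulVec x 1, B.mulVec x 0, 0],
                             ![0, 0, 2 * B.mulVec x 2],
                             ![0, B.mulVec x 2, B.mulVec x 1]] * B) := by
    ext i j
    rw [Matrix.of_apply, hw i]
    simp only [gd, rhoC, Fin.sum_univ_three, Matrix.cons_val_zero, Matrix.cons_val_one,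
      Matrix.head_cons, Matrix.cons_val_two, Matrix.tail_cons, _root_.map_mul, map_pow,
      bind₁_X_right, pderiv_C_mul, map_add, pderiv_mul, pderiv_pow, pderiv_linSub,
      Matrix.smul_apply, Matrix.mul_apply, Matrix.of_apply, smul_eq_mul, map_ofNat]
    simp only [map_add, _root_.map_mul, map_pow, eval_C, eval_linSub, map_ofNat]
    fin_cases i <;> fin_cases j <;>
      simp [Fin.sum_univ_three, Matrix.mul_apply] <;> ring_nf <;> tauto
  rw [Jfun_eq, hE, Matrix.det_smul, Matrix.det_mul, Matrix.det_mul]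
  have h2 : (Matrix.of ![![B.mulVec x 1, B.mulVec x 0, 0],
                             ![0, 0, 2 * B.mulVec x 2],
                             ![0, B.mulVec x 2, B.mulVec x 1]]).det
      = -2 * (B.mulVec x 1 * (B.mulVec x 2 * B.mulVec x 2)) := by
    simp [Matrix.det_fin_three, Matrix.vecHead, Matrix.vecTail]; ring
  rw [h2]
  simp [Fintype.card_fin]
  ring

lemma Jfun_orbit_tau {w : W9} {A B : Matrix (Fin 3) (Fin 3) ℂ} {c : ℂ}
    (hw : ∀ i, toPoly w i = C c * gd A B tauC i) (x : V3) :
    Jfun w x = c ^ 3 * A.det * B.det *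
      (-2 * (B.mulVec x 0 * (B.mulVec x 0 * B.mulVec x 0))) := by
  have hE : (Matrix.of fun i j => eval x (pderiv j (toPoly w i)))
      = c • (A * Matrix.of ![![2 * B.mulVec x 0, 0, 0],
                             ![B.mulVec x 1, B.mulVec x 0, 0],
                             ![-B.mulVec x 2, 2 * B.mulVec x 1, -B.mulVec x 0]] * B) := by
    ext i j
    rw [Matrix.of_apply, hw i]
    simp only [gd, tauC, Fin.sum_univ_three, Matrix.cons_val_zero, Matrix.cons_val_one,
      Matrix.head_cons, Matrix.cons_val_two, Matrix.tail_cons, _root_.map_mul, map_pow, map_sub,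
      bind₁_X_right, pderiv_C_mul, map_add, pderiv_mul, pderiv_pow, pderiv_linSub,
      Matrix.smul_apply, Matrix.mul_apply, Matrix.of_apply, smul_eq_mul, map_ofNat]
    simp only [map_add, map_sub, _root_.map_mul, map_pow, eval_C, eval_linSub, map_ofNat]
    fin_cases i <;> fin_cases j <;>
      simp [Fin.sum_univ_three, Matrix.mul_apply] <;> ring_nf <;> tauto
  rw [Jfun_eq, hE, Matrix.det_smul, Matrix.det_mul, Matrix.det_mul]
  have h2 : (Matrix.of ![![2 * B.mulVec x 0, 0, 0],
                             ![B.mulVec x 1, B.mulVec x 0, 0],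
                             ![-B.mulVec x 2, 2 * B.mulVec x 1, -B.mulVec x 0]]).det
      = -2 * (B.mulVec x 0 * (B.mulVec x 0 * B.mulVec x 0)) := by
    simp [Matrix.det_fin_three, Matrix.vecHead, Matrix.vecTail]; ring
  rw [h2]
  simp [Fintype.card_fin]
  ring

@[fun_prop]
lemma contJ (x : V3) : Continuous fun w => Jfun w x := by
  simp only [Jfun, Matrix.det_fin_three, Matrix.of_apply, sw, Fin.sum_univ_three]
  fun_prop

@[fun_prop]
lemma contPhi (x y z : V3) : Continuous fun w => Phi w x y z := by
  unfold Phi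
  fun_prop

lemma isClosed_Z1 : IsClosed Z1 := by
  have : Z1 = ⋂ (x : V3) (y : V3) (z : V3) (x' : V3) (y' : V3) (z' : V3),
      {w | Phi w x y z * Phi w x' y' z' = Phi w x' y z * Phi w x y' z'} := by
    ext w; simp [Z1, Set.mem_iInter]
  rw [this]
  exact isClosed_iInter fun x => isClosed_iInter fun y => isClosed_iInter fun z =>
    isClosed_iInter fun x' => isClosed_iInter fun y' => isClosed_iInter fun z' =>
      isClosed_eq ((contPhi _ _ _).mul (contPhi _ _ _)) ((contPhi _ _ _).mul (contPhi _ _ _))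

lemma isClosed_Z2 : IsClosed Z2 := by
  have : Z2 = ⋂ (x : V3),
      {w | (Matrix.of fun a b => Phi w x (ebase a) (ebase b)).det = 0} := by
    ext w; simp [Z2, Set.mem_iInter]
  rw [this]
  refine isClosed_iInter fun x => isClosed_eq ?_ continuous_const
  simp only [Matrix.det_fin_three, Matrix.of_apply]
  fun_prop

lemma exists_ker (u v : V3) : ∃ n : V3, n ≠ 0 ∧
    (∑ b, u b * n b = 0) ∧ (∑ b, v b * n b = 0) := by
  set M : Matrix (Fin 2) (Fin 3) ℂ := Matrix.of ![u, v] with hM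
  have hker : LinearMap.ker M.mulVecLin ≠ ⊥ := by
    intro h
    have hinj : Function.Injective M.mulVecLin := LinearMap.ker_eq_bot.mp h
    have := LinearMap.finrank_le_finrank_of_injective hinj
    simp [Module.finrank_pi] at this
  rcases Submodule.ne_bot_iff _ |>.mp hker with ⟨n, hn, hn0⟩
  refine ⟨n, hn0, ?_, ?_⟩
  · have := congrFun (LinearMap.mem_ker.mp hn) 0
    simpa [Matrix.mulVecLin_apply, Matrix.mulVec, dotProduct, hM,
      mul_comm] using this
  · have := congrFun (LinearMap.mem_ker.mp hn) 1
    simpa [Matrix.mulVecLin_apply, Matrix.mulVec, dotProduct, hM,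
      mul_comm] using this

lemma mulVec_addf (B : Matrix (Fin 3) (Fin 3) ℂ) (j : Fin 3) (u v : V3) :
    B.mulVec (u + v) j = B.mulVec u j + B.mulVec v j := by
  rw [Matrix.mulVec_add]; rfl

lemma phi_cube {w : W9} {K : ℂ} {l : V3 → ℂ}
    (hl : ∀ u v, l (u + v) = l u + l v)
    (h : ∀ v, Jfun w v = K * (l v * (l v * l v))) (x y z : V3) :
    Phi w x y z = K * (l x * l y * l z) := by
  simp only [Phi, h, hl]; ring

lemma phi_12 {w : W9} {K : ℂ} {a b : V3 → ℂ}
    (ha : ∀ u v, a (u + v) = a u + a v) (hb : ∀ u v, b (u + v) = b u + b v)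
    (h : ∀ v, Jfun w v = K * (a v * (b v * b v))) (x y z : V3) :
    Phi w x y z = K / 3 * (a x * b y * b z + a y * b x * b z + a z * b x * b y) := by
  simp only [Phi, h, ha, hb]; ring

lemma phi_111 {w : W9} {K : ℂ} {a b c : V3 → ℂ}
    (ha : ∀ u v, a (u + v) = a u + a v) (hb : ∀ u v, b (u + v) = b u + b v)
    (hc : ∀ u v, c (u + v) = c u + c v)
    (h : ∀ v, Jfun w v = K * (a v * (b v * c v))) (x y z : V3) :
    Phi w x y z = K / 6 * (a x * b y * c z + a x * b z * c y + a y * b x * c z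
      + a y * b z * c x + a z * b x * c y + a z * b y * c x) := by
  simp only [Phi, h, ha, hb, hc]; ring

lemma Sigma1_subset_Z1 : Sigma1 ⊆ Z1 := by
  rintro w ⟨A, B, c, hA, hB, hc, hw⟩ x y z x' y' z'
  set K : ℂ := c ^ 3 * A.det * B.det * (-2) with hK
  have h : ∀ v, Jfun w v = K * (B.mulVec v 0 * (B.mulVec v 0 * B.mulVec v 0)) := by
    intro v; rw [Jfun_orbit_tau hw v]; ring
  rw [phi_cube (mulVec_addf B 0) h, phi_cube (mulVec_addf B 0) h,
    phi_cube (mulVec_addf B 0) h, phi_cube (mulVec_addf B 0) h]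
  ring

lemma Sigma2_subset_Z2 : Sigma2 ⊆ Z2 := by
  rintro w ⟨A, B, c, hA, hB, hc, hw⟩ x
  set K : ℂ := c ^ 3 * A.det * B.det * (-2) with hK
  have h : ∀ v, Jfun w v = K * (B.mulVec v 1 * (B.mulVec v 2 * B.mulVec v 2)) := by
    intro v; rw [Jfun_orbit_rho hw v]; ring
  obtain ⟨n, hn0, hun, hvn⟩ := exists_ker (fun a => B 1 a) (fun a => B 2 a)
  rw [← Matrix.exists_mulVec_eq_zero_iff]
  refine ⟨n, hn0, ?_⟩
  funext a
  have hb : ∀ (j : Fin 3) (b : Fin 3), B.mulVec (ebase b) j = B j b := by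
    intro j b
    fin_cases b <;>
      simp [Matrix.mulVec, dotProduct, ebase, Fin.sum_univ_three]
  have hphi : ∀ b, Phi w x (ebase a) (ebase b) = K / 3 *
      (B.mulVec x 1 * B 2 a * B 2 b + B 1 a * B.mulVec x 2 * B 2 b
        + B 1 b * B.mulVec x 2 * B 2 a) := by
    intro b
    rw [phi_12 (mulVec_addf B 1) (mulVec_addf B 2) h]
    simp only [hb]
    try ring
  have : (Matrix.of fun a b => Phi w x (ebase a) (ebase b)).mulVec n a
      = ∑ b, Phi w x (ebase a) (ebase b) * n b := by
    simp [Matrix.mulVec, dotProduct]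
  rw [this]
  simp only [hphi]
  rw [Fin.sum_univ_three] at hun hvn ⊢
  simp only [Pi.zero_apply]
  linear_combination (K / 3 * (B.mulVec x 1 * B 2 a + B 1 a * B.mulVec x 2)) * hvn
    + (K / 3 * (B.mulVec x 2 * B 2 a)) * hun

lemma Sigma2_disjoint_Z1 : ∀ w ∈ Sigma2, w ∉ Z1 := by
  rintro w ⟨A, B, c, hA, hB, hc, hw⟩ hZ
  set K : ℂ := c ^ 3 * A.det * B.det * (-2) with hK
  have hKne : K ≠ 0 := by
    simp only [hK]
    exact mul_ne_zero (mul_ne_zero (mul_ne_zero (pow_ne_zero _ hc) hA.ne_zero)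
      hB.ne_zero) (by norm_num)
  have h : ∀ v, Jfun w v = K * (B.mulVec v 1 * (B.mulVec v 2 * B.mulVec v 2)) := by
    intro v; rw [Jfun_orbit_rho hw v]; ring
  have hBinv := B.mul_nonsing_inv hB
  set u : V3 := B⁻¹.mulVec ![0, 1, 0] with hu'
  set v : V3 := B⁻¹.mulVec ![0, 0, 1] with hv'
  have hu : B.mulVec u = ![0, 1, 0] := by
    rw [hu', Matrix.mulVec_mulVec, hBinv, Matrix.one_mulVec]
  have hv : B.mulVec v = ![0, 0, 1] := by
    rw [hv', Matrix.mulVec_mulVec, hBinv, Matrix.one_mulVec]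
  have hE := hZ u v v v u v
  rw [phi_12 (mulVec_addf B 1) (mulVec_addf B 2) h,
    phi_12 (mulVec_addf B 1) (mulVec_addf B 2) h,
    phi_12 (mulVec_addf B 1) (mulVec_addf B 2) h,
    phi_12 (mulVec_addf B 1) (mulVec_addf B 2) h, hu, hv] at hE
  simp at hE
  exact hKne hE

lemma Sigma3_disjoint_Z1 : ∀ w ∈ Sigma3, w ∉ Z1 := by
  rintro w ⟨A, B, c, hA, hB, hc, hw⟩ hZ
  set K : ℂ := c ^ 3 * A.det * B.det * 2 with hK
  have hKne : K ≠ 0 := by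
    simp only [hK]
    exact mul_ne_zero (mul_ne_zero (mul_ne_zero (pow_ne_zero _ hc) hA.ne_zero)
      hB.ne_zero) (by norm_num)
  have h : ∀ v, Jfun w v = K * (B.mulVec v 0 * (B.mulVec v 1 * B.mulVec v 2)) := by
    intro v; rw [Jfun_orbit_sigma hw v]; ring
  have hBinv := B.mul_nonsing_inv hB
  set u0 : V3 := B⁻¹.mulVec ![1, 0, 0] with hu0'
  set u1 : V3 := B⁻¹.mulVec ![0, 1, 0] with hu1'
  set u2 : V3 := B⁻¹.mulVec ![0, 0, 1] with hu2'
  have hu0 : B.mulVec u0 = ![1, 0, 0] := by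
    rw [hu0', Matrix.mulVec_mulVec, hBinv, Matrix.one_mulVec]
  have hu1 : B.mulVec u1 = ![0, 1, 0] := by
    rw [hu1', Matrix.mulVec_mulVec, hBinv, Matrix.one_mulVec]
  have hu2 : B.mulVec u2 = ![0, 0, 1] := by
    rw [hu2', Matrix.mulVec_mulVec, hBinv, Matrix.one_mulVec]
  have hE := hZ u0 u1 u2 u1 u0 u2
  rw [phi_111 (mulVec_addf B 0) (mulVec_addf B 1) (mulVec_addf B 2) h,
    phi_111 (mulVec_addf B 0) (mulVec_addf B 1) (mulVec_addf B 2) h,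
    phi_111 (mulVec_addf B 0) (mulVec_addf B 1) (mulVec_addf B 2) h,
    phi_111 (mulVec_addf B 0) (mulVec_addf B 1) (mulVec_addf B 2) h,
    hu0, hu1, hu2] at hE
  simp at hE
  exact hKne hE

lemma Sigma3_disjoint_Z2 : ∀ w ∈ Sigma3, w ∉ Z2 := by
  rintro w ⟨A, B, c, hA, hB, hc, hw⟩ hZ
  set K : ℂ := c ^ 3 * A.det * B.det * 2 with hK
  have hKne : K ≠ 0 := by
    simp only [hK]
    exact mul_ne_zero (mul_ne_zero (mul_ne_zero (pow_ne_zero _ hc) hA.ne_zero)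
      hB.ne_zero) (by norm_num)
  have h : ∀ v, Jfun w v = K * (B.mulVec v 0 * (B.mulVec v 1 * B.mulVec v 2)) := by
    intro v; rw [Jfun_orbit_sigma hw v]; ring
  have hBinv := B.mul_nonsing_inv hB
  set x : V3 := B⁻¹.mulVec ![1, 1, 1] with hx'
  have hx : B.mulVec x = ![1, 1, 1] := by
    rw [hx', Matrix.mulVec_mulVec, hBinv, Matrix.one_mulVec]
  have hb : ∀ (j : Fin 3) (b : Fin 3), B.mulVec (ebase b) j = B j b := by
    intro j b
    fin_cases b <;>
      simp [Matrix.mulVec, dotProduct, ebase, Fin.sum_univ_three]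
  have hN : (Matrix.of fun a b => Phi w x (ebase a) (ebase b))
      = (K / 6) • (B.transpose * Matrix.of ![![(0:ℂ), 1, 1], ![1, 0, 1], ![1, 1, 0]] * B) := by
    ext a b
    rw [Matrix.of_apply,
      phi_111 (mulVec_addf B 0) (mulVec_addf B 1) (mulVec_addf B 2) h, hx]
    simp only [hb, Matrix.smul_apply, Matrix.mul_apply, Matrix.transpose_apply,
      Fin.sum_univ_three, Matrix.of_apply, smul_eq_mul, Matrix.cons_val_zero,
      Matrix.cons_val_one, Matrix.head_cons, Matrix.cons_val_two, Matrix.tail_cons]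
    simp [Matrix.vecHead, Matrix.vecTail]
    try ring
    try tauto
  have hdet := hZ x
  rw [hN] at hdet
  rw [Matrix.det_smul, Matrix.det_mul, Matrix.det_mul, Matrix.det_transpose] at hdet
  have hNdet : (Matrix.of ![![(0:ℂ), 1, 1], ![1, 0, 1], ![1, 1, 0]]).det = 2 := by
    rw [Matrix.det_fin_three]; simp; norm_num
  rw [hNdet] at hdet
  simp only [Fintype.card_fin] at hdet
  have hne : (K / 6) ^ 3 * (B.det * 2 * B.det) ≠ 0 := by
    refine mul_ne_zero (pow_ne_zero _ (div_ne_zero hKne (by norm_num))) ?_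
    exact mul_ne_zero (mul_ne_zero hB.ne_zero (by norm_num)) hB.ne_zero
  exact hne hdet

lemma linSub_comp (B B' : Matrix (Fin 3) (Fin 3) ℂ) (k : Fin 3) :
    bind₁ (linSub B) (linSub B' k) = linSub (B' * B) k := by
  simp only [linSub, Fin.sum_univ_three, map_add, _root_.map_mul, bind₁_X_right,
    bind₁_C_right, Matrix.mul_apply]
  ring

lemma gd_gd (A B A' B' : Matrix (Fin 3) (Fin 3) ℂ) (F : Fin 3 → P3) (i : Fin 3) :
    ∑ j, C (A i j) * bind₁ (linSub B) (∑ m, C (A' j m) * bind₁ (linSub B') (F m))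
      = ∑ m, C ((A * A') i m) * bind₁ (linSub (B' * B)) (F m) := by
  have hb : ∀ m, bind₁ (linSub B) (bind₁ (linSub B') (F m))
      = bind₁ (linSub (B' * B)) (F m) := by
    intro m
    have hfe : (fun k => bind₁ (linSub B) (linSub B' k)) = linSub (B' * B) :=
      funext (linSub_comp B B')
    rw [bind₁_bind₁, hfe]
  simp only [Fin.sum_univ_three, map_add, _root_.map_mul, bind₁_C_right, hb,
    Matrix.mul_apply]
  ring

noncomputable def theta (A B : Matrix (Fin 3) (Fin 3) ℂ) (c : ℂ) (v : W9) : W9 :=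
  fun i p q => c * ∑ j, A i j * ∑ j', ∑ k, v j j' k * (B j' p * B k q)

lemma toPoly_theta (A B : Matrix (Fin 3) (Fin 3) ℂ) (c : ℂ) (v : W9) (i : Fin 3) :
    toPoly (theta A B c v) i = C c * gd A B (toPoly v) i := by
  apply MvPolynomial.funext
  intro x
  simp only [toPoly, theta, gd, linSub, Fin.sum_univ_three, map_add, _root_.map_mul,
    bind₁_X_right, bind₁_C_right, eval_C, eval_X, eval_add, eval_mul]
  ring

lemma toPoly_add (u v : W9) (i : Fin 3) :
    toPoly (u + v) i = toPoly u i + toPoly v i := by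
  simp only [toPoly, Fin.sum_univ_three, Pi.add_apply, map_add]
  ring

lemma toPoly_sub (u v : W9) (i : Fin 3) :
    toPoly (u - v) i = toPoly u i - toPoly v i := by
  simp only [toPoly, Fin.sum_univ_three, Pi.sub_apply, map_sub]
  ring

lemma cont_theta (A B : Matrix (Fin 3) (Fin 3) ℂ) (c : ℂ) : Continuous (theta A B c) := by
  refine continuous_pi fun i => continuous_pi fun p => continuous_pi fun q => ?_
  simp only [theta, Fin.sum_univ_three]
  fun_prop

lemma orbit_congr {F₀ : Fin 3 → P3} {u v : W9} (h : ∀ i, toPoly u i = toPoly v i)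
    (hv : InGDOrbit F₀ v) : InGDOrbit F₀ u := by
  obtain ⟨A, B, c, hA, hB, hc, hw⟩ := hv
  exact ⟨A, B, c, hA, hB, hc, fun i => (h i).trans (hw i)⟩

lemma theta_mem {F₀ : Fin 3 → P3} {A B : Matrix (Fin 3) (Fin 3) ℂ} {c : ℂ}
    (hA : IsUnit A.det) (hB : IsUnit B.det) (hc : c ≠ 0) {v : W9}
    (hv : InGDOrbit F₀ v) : InGDOrbit F₀ (theta A B c v) := by
  obtain ⟨A', B', c', hA', hB', hc', hw⟩ := hv
  refine ⟨A * A', B' * B, c * c', ?_, ?_, mul_ne_zero hc hc', ?_⟩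
  · rw [Matrix.det_mul]; exact hA.mul hA'
  · rw [Matrix.det_mul]; exact hB'.mul hB
  · intro i
    rw [toPoly_theta]
    have : gd A B (toPoly v) i = C c' * gd (A * A') (B' * B) F₀ i := by
      have h1 : ∀ j, bind₁ (linSub B) (toPoly v j)
          = C c' * bind₁ (linSub B) (gd A' B' F₀ j) := by
        intro j
        rw [hw j, _root_.map_mul, bind₁_C_right]
      simp only [gd] at h1 ⊢
      calc ∑ j, C (A i j) * bind₁ (linSub B) (toPoly v j)
          = C c' * ∑ j, C (A i j) * bind₁ (linSub B)
              (∑ m, C (A' j m) * bind₁ (linSub B') (F₀ m)) := by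
            simp only [h1]; rw [Finset.mul_sum]; congr 1; funext j; ring
        _ = C c' * ∑ m, C ((A * A') i m) * bind₁ (linSub (B' * B)) (F₀ m) := by
            rw [gd_gd A B A' B' F₀ i]
    rw [this, _root_.map_mul]
    ring

lemma ext_closure {F₀ : Fin 3 → P3} {w w₀ : W9} {A B : Matrix (Fin 3) (Fin 3) ℂ} {c : ℂ}
    (hA : IsUnit A.det) (hB : IsUnit B.det) (hc : c ≠ 0)
    (hw : ∀ i, toPoly w i = C c * gd A B (toPoly w₀) i)
    (h₀ : w₀ ∈ closure {v | InGDOrbit F₀ v}) :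
    w ∈ closure {v | InGDOrbit F₀ v} := by
  set S : Set W9 := {v | InGDOrbit F₀ v}
  have hθ : theta A B c w₀ ∈ closure S := by
    have : Set.MapsTo (theta A B c) S S := fun v hv => theta_mem hA hB hc hv
    exact this.closure (cont_theta A B c) h₀
  set d : W9 := w - theta A B c w₀ with hd
  have hdp : ∀ i, toPoly d i = 0 := by
    intro i
    rw [hd, toPoly_sub, toPoly_theta, ← hw i, sub_self]
  have htr : Set.MapsTo (fun v => v + d) S S := by
    intro v hv
    refine orbit_congr (fun i => ?_) hv
    rw [toPoly_add, hdp, add_zero]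
  have hcont : Continuous (fun v : W9 => v + d) := by fun_prop
  have := htr.closure hcont hθ
  simpa [hd] using this

/-- family in the σ-orbit degenerating to ρ -/
noncomputable def dSR (t : ℂ) : W9 :=
  ![![![0, 1, 0], ![0, 0, 0], ![0, 0, 0]],
    ![![0, 0, t], ![0, 0, 0], ![0, 0, 1]],
    ![![0, 0, 0], ![0, 0, 1], ![0, 0, 0]]]

/-- family in the ρ-orbit degenerating to τ -/
noncomputable def dRT (t : ℂ) : W9 :=
  ![![![1, 0, 0], ![0, 0, 0], ![0, 0, 0]],
    ![![0, 1, t], ![0, 0, 0], ![0, 0, 0]],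
    ![![0, 0, -1], ![0, 1, t], ![0, 0, 0]]]

/-- family in the τ-orbit degenerating to lin0 -/
noncomputable def dTL (t : ℂ) : W9 :=
  ![![![1, 0, 0], ![0, 0, 0], ![0, 0, 0]],
    ![![0, 1, 0], ![0, 0, 0], ![0, 0, 0]],
    ![![0, 0, 1], ![0, t, 0], ![0, 0, 0]]]

lemma cont_dSR : Continuous dSR := by
  refine continuous_pi fun i => continuous_pi fun j => continuous_pi fun k => ?_
  fin_cases i <;> fin_cases j <;> fin_cases k <;> simp [dSR] <;> fun_prop

lemma cont_dRT : Continuous dRT := by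
  refine continuous_pi fun i => continuous_pi fun j => continuous_pi fun k => ?_
  fin_cases i <;> fin_cases j <;> fin_cases k <;> simp [dRT] <;> fun_prop

lemma cont_dTL : Continuous dTL := by
  refine continuous_pi fun i => continuous_pi fun j => continuous_pi fun k => ?_
  fin_cases i <;> fin_cases j <;> fin_cases k <;> simp [dTL] <;> fun_prop

lemma dSR_mem {t : ℂ} (ht : t ≠ 0) : InGDOrbit sigmaC (dSR t) := by
  refine ⟨Matrix.of ![![1/t, 0, -(1/t)], ![0, 1, 0], ![0, 0, 1]],
    Matrix.of ![![0, 0, 1], ![0, 1, 0], ![t, 0, 1]], 1, ?_, ?_, one_ne_zero, ?_⟩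
  · apply isUnit_iff_ne_zero.mpr
    simp [Matrix.det_fin_three, Matrix.vecHead, Matrix.vecTail, ht]
  · apply isUnit_iff_ne_zero.mpr
    simp [Matrix.det_fin_three, Matrix.vecHead, Matrix.vecTail, ht]
  · intro i
    apply MvPolynomial.funext
    intro x
    fin_cases i <;>
    · simp only [dSR, toPoly, gd, sigmaC, linSub, Fin.sum_univ_three, map_add,
        _root_.map_mul, map_sub, map_pow, bind₁_X_right, bind₁_C_right, eval_C, eval_X,
        eval_add, eval_sub, eval_mul, eval_pow, map_one, map_zero, Matrix.cons_val_zero,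
        Matrix.cons_val_one, Matrix.head_cons, Matrix.cons_val_two, Matrix.tail_cons,
        Matrix.of_apply, one_mul, Matrix.vecHead, Matrix.vecTail, Function.comp, Fin.succ_zero_eq_one, Fin.succ_one_eq_two,
        Fin.zero_eta, Fin.mk_one, Fin.reduceFinMk, Matrix.cons_val]
      try field_simp
      try ring
      try tauto

lemma dRT_mem {t : ℂ} (ht : t ≠ 0) : InGDOrbit rhoC (dRT t) := by
  refine ⟨Matrix.of ![![0, 1, 0], ![0, -(1/t), 1], ![1, 1/t^2, 0]],
    Matrix.of ![![-(1/t), 1, 0], ![1/t, 1, t], ![1, 0, 0]], 1, ?_, ?_, one_ne_zero, ?_⟩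
  · simp [Matrix.det_fin_three, Matrix.vecHead, Matrix.vecTail, Function.comp, Fin.succ_zero_eq_one, Fin.succ_one_eq_two]
  · apply isUnit_iff_ne_zero.mpr
    simp [Matrix.det_fin_three, Matrix.vecHead, Matrix.vecTail, ht]
  · intro i
    apply MvPolynomial.funext
    intro x
    fin_cases i <;>
    · simp only [dRT, toPoly, gd, rhoC, linSub, Fin.sum_univ_three, map_add,
        _root_.map_mul, map_sub, map_pow, bind₁_X_right, bind₁_C_right, eval_C, eval_X,
        eval_add, eval_sub, eval_mul, eval_pow, map_one, map_zero, Matrix.cons_val_zero,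
        Matrix.cons_val_one, Matrix.head_cons, Matrix.cons_val_two, Matrix.tail_cons,
        Matrix.of_apply, one_mul, map_neg, eval_neg, Matrix.vecHead, Matrix.vecTail, Function.comp, Fin.succ_zero_eq_one, Fin.succ_one_eq_two,
        Fin.zero_eta, Fin.mk_one, Fin.reduceFinMk, Matrix.cons_val]
      try field_simp
      try ring
      try tauto

lemma dTL_mem {t : ℂ} (ht : t ≠ 0) : InGDOrbit tauC (dTL t) := by
  refine ⟨Matrix.of ![![1, 0, 0], ![0, 1, 0], ![0, 0, t]],
    Matrix.of ![![1, 0, 0], ![0, 1, 0], ![0, 0, -(1/t)]], 1, ?_, ?_, one_ne_zero, ?_⟩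
  · apply isUnit_iff_ne_zero.mpr
    simp [Matrix.det_fin_three, Matrix.vecHead, Matrix.vecTail, ht]
  · apply isUnit_iff_ne_zero.mpr
    simp [Matrix.det_fin_three, Matrix.vecHead, Matrix.vecTail, ht]
  · intro i
    apply MvPolynomial.funext
    intro x
    fin_cases i <;>
    · simp only [dTL, toPoly, gd, tauC, linSub, Fin.sum_univ_three, map_add,
        _root_.map_mul, map_sub, map_pow, bind₁_X_right, bind₁_C_right, eval_C, eval_X,
        eval_add, eval_sub, eval_mul, eval_pow, map_one, map_zero, Matrix.cons_val_zero,
        Matrix.cons_val_one, Matrix.head_cons, Matrix.cons_val_two, Matrix.tail_cons,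
        Matrix.of_apply, one_mul, map_neg, eval_neg, Matrix.vecHead, Matrix.vecTail, Function.comp, Fin.succ_zero_eq_one, Fin.succ_one_eq_two,
        Fin.zero_eta, Fin.mk_one, Fin.reduceFinMk, Matrix.cons_val]
      try field_simp
      try ring
      try tauto

lemma toPoly_dSR0 (i : Fin 3) : toPoly (dSR 0) i = rhoC i := by
  apply MvPolynomial.funext
  intro x
  fin_cases i <;>
    simp [dSR, toPoly, rhoC, Fin.sum_univ_three, Matrix.vecHead, Matrix.vecTail, Function.comp, Fin.succ_zero_eq_one, Fin.succ_one_eq_two] <;>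
    try ring

lemma toPoly_dRT0 (i : Fin 3) : toPoly (dRT 0) i = tauC i := by
  apply MvPolynomial.funext
  intro x
  fin_cases i <;>
    simp [dRT, toPoly, tauC, Fin.sum_univ_three, Matrix.vecHead, Matrix.vecTail, Function.comp, Fin.succ_zero_eq_one, Fin.succ_one_eq_two] <;>
    try ring

lemma toPoly_dTL0 (i : Fin 3) : toPoly (dTL 0) i = lin0C i := by
  apply MvPolynomial.funext
  intro x
  fin_cases i <;>
    simp [dTL, toPoly, lin0C, Fin.sum_univ_three, Matrix.vecHead, Matrix.vecTail, Function.comp, Fin.succ_zero_eq_one, Fin.succ_one_eq_two] <;>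
    try ring

lemma deg_mem_closure {S : Set W9} {d : ℂ → W9} (hd : Continuous d)
    (h : ∀ t : ℂ, t ≠ 0 → d t ∈ S) : d 0 ∈ closure S := by
  have htend : Filter.Tendsto d (nhdsWithin 0 {0}ᶜ) (nhds (d 0)) :=
    (hd.tendsto 0).mono_left nhdsWithin_le_nhds
  exact mem_closure_of_tendsto htend
    (eventually_nhdsWithin_of_forall fun t ht => h t ht)

lemma set3 : Sigma3 = {v | InGDOrbit sigmaC v} := rfl
lemma set2 : Sigma2 = {v | InGDOrbit rhoC v} := rfl
lemma set1 : Sigma1 = {v | InGDOrbit tauC v} := rfl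

lemma wRho_closure : dSR 0 ∈ closure Sigma3 :=
  deg_mem_closure cont_dSR (fun _ ht => dSR_mem ht)

lemma wTau_closure : dRT 0 ∈ closure Sigma2 :=
  deg_mem_closure cont_dRT (fun _ ht => dRT_mem ht)

lemma wLin_closure : dTL 0 ∈ closure Sigma1 :=
  deg_mem_closure cont_dTL (fun _ ht => dTL_mem ht)

lemma S2_sub_cl3 : Sigma2 ⊆ closure Sigma3 := by
  rintro w ⟨A, B, c, hA, hB, hc, hw⟩
  rw [set3]
  refine ext_closure hA hB hc (fun i => ?_) (by rw [← set3]; exact wRho_closure)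
  rw [hw i, show rhoC = toPoly (dSR 0) from funext fun j => (toPoly_dSR0 j).symm]

lemma S1_sub_cl2 : Sigma1 ⊆ closure Sigma2 := by
  rintro w ⟨A, B, c, hA, hB, hc, hw⟩
  rw [set2]
  refine ext_closure hA hB hc (fun i => ?_) (by rw [← set2]; exact wTau_closure)
  rw [hw i, show tauC = toPoly (dRT 0) from funext fun j => (toPoly_dRT0 j).symm]

lemma S0_sub_cl1 : Sigma0 ⊆ closure Sigma1 := by
  rintro w ⟨A, B, c, hA, hB, hc, hw⟩
  rw [set1]
  refine ext_closure hA hB hc (fun i => ?_) (by rw [← set1]; exact wLin_closure)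
  rw [hw i, show lin0C = toPoly (dTL 0) from funext fun j => (toPoly_dTL0 j).symm]

lemma S0_sub_cl2 : Sigma0 ⊆ closure Sigma2 :=
  S0_sub_cl1.trans (closure_minimal S1_sub_cl2 isClosed_closure)

lemma S1_sub_cl3 : Sigma1 ⊆ closure Sigma3 :=
  S1_sub_cl2.trans (closure_minimal S2_sub_cl3 isClosed_closure)

lemma S0_sub_cl3 : Sigma0 ⊆ closure Sigma3 :=
  S0_sub_cl2.trans (closure_minimal S2_sub_cl3 isClosed_closure)

lemma bir2_sub_cl3 : Bir2 ⊆ closure Sigma3 := by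
  rintro w (((h | h) | h) | h)
  · exact S0_sub_cl3 h
  · exact S1_sub_cl3 h
  · exact S2_sub_cl3 h
  · exact subset_closure h

end Inc

/-- Incidence relations in `Bir₂` (closures taken inside `Bir₂`):
`cl(Σ¹) = Σ⁰ ∪ Σ¹`, `cl(Σ²) = Σ⁰ ∪ Σ¹ ∪ Σ²`, `cl(Σ³) = Bir₂`; in particular `Σ³` is
dense in `Bir₂`. -/
theorem incidence_relations :
    closure Sigma1 ∩ Bir2 = Sigma0 ∪ Sigma1 ∧
    closure Sigma2 ∩ Bir2 = Sigma0 ∪ Sigma1 ∪ Sigma2 ∧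
    closure Sigma3 ∩ Bir2 = Bir2 ∧
    Bir2 ⊆ closure Sigma3 := by
  refine ⟨?_, ?_, ?_, Inc.bir2_sub_cl3⟩
  · apply subset_antisymm
    · rintro w ⟨hcl, hb⟩
      have hZ : w ∈ Inc.Z1 := closure_minimal Inc.Sigma1_subset_Z1 Inc.isClosed_Z1 hcl
      rcases hb with ((h | h) | h) | h
      · exact Or.inl h
      · exact Or.inr h
      · exact absurd hZ (Inc.Sigma2_disjoint_Z1 w h)
      · exact absurd hZ (Inc.Sigma3_disjoint_Z1 w h)
    · rintro w (h | h)
      · exact ⟨Inc.S0_sub_cl1 h, Or.inl (Or.inl (Or.inl h))⟩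
      · exact ⟨subset_closure h, Or.inl (Or.inl (Or.inr h))⟩
  · apply subset_antisymm
    · rintro w ⟨hcl, hb⟩
      have hZ : w ∈ Inc.Z2 := closure_minimal Inc.Sigma2_subset_Z2 Inc.isClosed_Z2 hcl
      rcases hb with ((h | h) | h) | h
      · exact Or.inl (Or.inl h)
      · exact Or.inl (Or.inr h)
      · exact Or.inr h
      · exact absurd hZ (Inc.Sigma3_disjoint_Z2 w h)
    · rintro w ((h | h) | h)
      · exact ⟨Inc.S0_sub_cl2 h, Or.inl (Or.inl (Or.inl h))⟩
      · exact ⟨Inc.S1_sub_cl2 h, Or.inl (Or.inl (Or.inr h))⟩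
      · exact ⟨subset_closure h, Or.inl (Or.inr h)⟩
  · exact Set.inter_eq_right.mpr Inc.bir2_sub_cl3
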